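/- Let H ∈ (0, 1/2) and let m ≥ 2 be an integer. Then 0 ≤ ∫₀¹ x^{H−1/2} ((m−1+x)^{H−1/2} − (m+x)^{H−1/2}) dx ≤ (m−1)^{H−3/2} / ((3/2−H)(1/2+H)). -/

import Mathlib

open Set intervalIntegral MeasureTheory

/-- MVT step: for `1 ≤ b` and negative exponent `a ∈ (-1,0)`,
`b^a - (b+1)^a ≤ -a * b^(a-1)`. -/
lemma rpow_diff_le {a b : ℝ} (ha : a < 0) (hb : 1 ≤ b) :
    b ^ a - (b + 1) ^ a ≤ -a * b ^ (a - 1) := by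
  have hb0 : (0 : ℝ) < b := lt_of_lt_of_le one_pos hb
  obtain ⟨c, hc, hceq⟩ := exists_hasDerivAt_eq_slope (fun t => t ^ a)
      (fun t => a * t ^ (a - 1)) (by linarith : b < b + 1)
      (fun t ht => (Real.continuousAt_rpow_const t a
        (Or.inl (ne_of_gt (lt_of_lt_of_le hb0 ht.1)))).continuousWithinAt)
      (fun t ht => Real.hasDerivAt_rpow_const (Or.inl (ne_of_gt (lt_trans hb0 ht.1))))
  have h1 : b ^ a - (b + 1) ^ a = -a * c ^ (a - 1) := by
    have : a * c ^ (a - 1) = ((b + 1) ^ a - b ^ a) / (b + 1 - b) := hceq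
    rw [show b + 1 - b = 1 by ring, div_one] at this
    linarith
  rw [h1]
  have hcb : c ^ (a - 1) ≤ b ^ (a - 1) :=
    Real.rpow_le_rpow_of_nonpos hb0 hc.1.le (by linarith)
  exact mul_le_mul_of_nonneg_left hcb (by linarith)

theorem alpha_one_integral_bound (H : ℝ) (h0 : 0 < H) (h12 : H < 1 / 2)
    (m : ℕ) (hm : 2 ≤ m) :
    0 ≤ (∫ x in (0 : ℝ)..1,
        x ^ (H - 1 / 2) * (((m : ℝ) - 1 + x) ^ (H - 1 / 2) - ((m : ℝ) + x) ^ (H - 1 / 2))) ∧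
      (∫ x in (0 : ℝ)..1,
        x ^ (H - 1 / 2) * (((m : ℝ) - 1 + x) ^ (H - 1 / 2) - ((m : ℝ) + x) ^ (H - 1 / 2)))
        ≤ ((m : ℝ) - 1) ^ (H - 3 / 2) / ((3 / 2 - H) * (1 / 2 + H)) := by
  set a : ℝ := H - 1 / 2 with ha_def
  have ha0 : a < 0 := by simp [ha_def]; linarith
  have ham1 : -1 < a := by simp [ha_def]; linarith
  have hm1 : (1 : ℝ) ≤ (m : ℝ) - 1 := by
    have : (2 : ℝ) ≤ (m : ℝ) := by exact_mod_cast hm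
    linarith
  set f : ℝ → ℝ := fun x => x ^ a * (((m : ℝ) - 1 + x) ^ a - ((m : ℝ) + x) ^ a) with hf_def
  set C : ℝ := (1 / 2 - H) * ((m : ℝ) - 1) ^ (H - 3 / 2) with hC_def
  have hC0 : 0 ≤ C := by
    apply mul_nonneg (by linarith)
    exact Real.rpow_nonneg (by linarith) _
  -- pointwise nonnegativity and upper bound on [0,1]
  have hpt : ∀ x ∈ Icc (0 : ℝ) 1, 0 ≤ f x ∧ f x ≤ C * x ^ a := by
    intro x hx
    have hx0 : 0 ≤ x := hx.1
    have hxa : 0 ≤ x ^ a := Real.rpow_nonneg hx0 _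
    have hbase : (1 : ℝ) ≤ (m : ℝ) - 1 + x := by linarith
    have hpos : (0 : ℝ) < (m : ℝ) - 1 + x := by linarith
    have hd0 : 0 ≤ ((m : ℝ) - 1 + x) ^ a - ((m : ℝ) + x) ^ a := by
      have := Real.rpow_le_rpow_of_nonpos hpos (by linarith : (m : ℝ) - 1 + x ≤ (m : ℝ) + x) ha0.le
      linarith
    refine ⟨mul_nonneg hxa hd0, ?_⟩
    have hdle : ((m : ℝ) - 1 + x) ^ a - ((m : ℝ) + x) ^ a ≤ C := by
      have h1 := rpow_diff_le ha0 hbase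
      rw [show (m : ℝ) - 1 + x + 1 = (m : ℝ) + x by ring] at h1
      have h2 : ((m : ℝ) - 1 + x) ^ (a - 1) ≤ ((m : ℝ) - 1) ^ (a - 1) :=
        Real.rpow_le_rpow_of_nonpos (by linarith) (by linarith) (by linarith)
      have hna : -a = 1 / 2 - H := by rw [ha_def]; ring
      have ha1 : a - 1 = H - 3 / 2 := by rw [ha_def]; ring
      calc ((m : ℝ) - 1 + x) ^ a - ((m : ℝ) + x) ^ a
          ≤ -a * ((m : ℝ) - 1 + x) ^ (a - 1) := h1
        _ ≤ -a * ((m : ℝ) - 1) ^ (a - 1) :=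
            mul_le_mul_of_nonneg_left h2 (by linarith)
        _ = C := by rw [hC_def, hna, ha1]
    calc f x = x ^ a * (((m : ℝ) - 1 + x) ^ a - ((m : ℝ) + x) ^ a) := rfl
      _ ≤ x ^ a * C := mul_le_mul_of_nonneg_left hdle hxa
      _ = C * x ^ a := mul_comm _ _
  -- integrability
  have hint_pow : IntervalIntegrable (fun x => x ^ a) volume 0 1 :=
    intervalIntegral.intervalIntegrable_rpow' ham1
  have hint_Cpow : IntervalIntegrable (fun x => C * x ^ a) volume 0 1 :=
    hint_pow.const_mul C
  have hmeas : AEStronglyMeasurable f (volume.restrict (Set.uIoc (0 : ℝ) 1)) := by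
    rw [uIoc_of_le (by norm_num : (0:ℝ) ≤ 1)]
    apply ContinuousOn.aestronglyMeasurable _ measurableSet_Ioc
    intro x hx
    have hx0 : (0:ℝ) < x := hx.1
    have h1 : (0:ℝ) < (m : ℝ) - 1 + x := by linarith
    have h2 : (0:ℝ) < (m : ℝ) + x := by linarith
    exact (((Real.continuousAt_rpow_const x a (Or.inl hx0.ne')).mul
      (((continuousAt_const.add continuousAt_id).rpow_const (Or.inl h1.ne')).sub
        ((continuousAt_const.add continuousAt_id).rpow_const (Or.inl h2.ne')))).continuousWithinAt)
  have hintf : IntervalIntegrable f volume 0 1 := by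
    apply hint_Cpow.mono_fun' hmeas
    filter_upwards [ae_restrict_mem measurableSet_Ioc] with x hx
    have hx' : x ∈ Icc (0 : ℝ) 1 := by
      rw [uIoc_of_le (by norm_num : (0:ℝ) ≤ 1)] at hx
      exact Ioc_subset_Icc_self hx
    have := hpt x hx'
    rw [Real.norm_of_nonneg this.1]
    exact this.2
  constructor
  · exact intervalIntegral.integral_nonneg (by norm_num) (fun x hx => (hpt x hx).1)
  · have hmono : (∫ x in (0 : ℝ)..1, f x) ≤ ∫ x in (0 : ℝ)..1, C * x ^ a :=
      intervalIntegral.integral_mono_on (by norm_num) hintf hint_Cpow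
        (fun x hx => (hpt x hx).2)
    have hval : (∫ x in (0 : ℝ)..1, C * x ^ a) = C / (a + 1) := by
      rw [intervalIntegral.integral_const_mul, integral_rpow (Or.inl ham1)]
      rw [Real.one_rpow, Real.zero_rpow (by linarith : a + 1 ≠ 0)]
      ring
    have hP : (0 : ℝ) ≤ ((m : ℝ) - 1) ^ (H - 3 / 2) := Real.rpow_nonneg (by linarith) _
    have hfinal : C / (a + 1) ≤ ((m : ℝ) - 1) ^ (H - 3 / 2) / ((3 / 2 - H) * (1 / 2 + H)) := by
      rw [hC_def, ha_def]
      rw [div_le_div_iff₀ (by linarith) (by nlinarith)]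
      nlinarith [hP, sq_nonneg H, mul_nonneg hP (sq_nonneg H)]
    calc (∫ x in (0 : ℝ)..1, f x) ≤ C / (a + 1) := hval ▸ hmono
      _ ≤ _ := hfinal
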